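/- Let p > 0 and let s ∈ ℝ with s ∉ {0, −1}. Let (u, v) be a positive classical solution of the system −Δu = v^p, −Δv = u on ℝ^n (i.e. the Lane–Emden system with q = 1). Then for every φ ∈ C_c²(ℝ^n): ∫ u v^{s−1} |∇v|² φ = (1/s) ∫ u² v^s φ − (1/(s(s+1))) ∫ v^{p+1+s} φ + I₆, where I₆ = (1/(s(s+1))) ∫ v^{s+1} (∇u·∇φ) − (1/s) ∫ u v^s (∇v·∇φ), all integrals being over ℝ^n. -/

import Mathlib

open MeasureTheory Real
open scoped InnerProductSpace
open Set

/-- The Laplacian of a function `f : ℝⁿ → ℝ`, as the sum of its second partial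
derivatives. -/
noncomputable def lap {n : ℕ} (f : EuclideanSpace ℝ (Fin n) → ℝ)
    (x : EuclideanSpace ℝ (Fin n)) : ℝ :=
  ∑ i : Fin n, fderiv ℝ (fun y => fderiv ℝ f y (EuclideanSpace.single i 1)) x
    (EuclideanSpace.single i 1)

lemma pi_integral_pderiv_eq_zero {m : ℕ} (h : (Fin (m+1) → ℝ) → ℝ)
    (hh : ContDiff ℝ 1 h) (hc : HasCompactSupport h) (i : Fin (m+1)) :
    ∫ x, fderiv ℝ h x (Pi.single i 1) = 0 := by
  obtain ⟨R, hR0, hR⟩ : ∃ R > 0, tsupport h ⊆ Metric.ball 0 R := by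
    obtain ⟨R, hR⟩ := hc.isBounded.subset_ball 0
    exact ⟨max R 1, by positivity, hR.trans (Metric.ball_subset_ball (le_max_left _ _))⟩
  set a : Fin (m+1) → ℝ := fun _ => -R with ha
  set b : Fin (m+1) → ℝ := fun _ => R with hb
  have hle : a ≤ b := fun j => by simp [ha, hb]; linarith
  have hsupIcc : tsupport h ⊆ Icc a b := by
    intro x hx
    have := hR hx
    simp only [Metric.mem_ball, dist_zero_right] at this
    rw [Set.mem_Icc]
    constructor <;> intro j <;>
      have h2 := abs_le.mp ((norm_le_pi_norm x j).trans this.le) <;>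
      simp [ha, hb] <;> [linarith [h2.1]; linarith [h2.2]]
  have hderc : Continuous fun x => fderiv ℝ h x (Pi.single i 1) :=
    ((hh.fderiv_right (m := 0) (by norm_num)).continuous).clm_apply continuous_const
  have key := integral_divergence_of_hasFDerivAt_off_countable a b hle
    (fun x => Pi.single i (h x))
    (fun x => ContinuousLinearMap.pi (Pi.single i (fderiv ℝ h x)))
    ∅ countable_empty ?_ ?_ ?_
  · have hzero : ∀ (c : ℝ) (x : Fin m → ℝ) (j : Fin (m+1)), |c| = R →
        (Pi.single i (h (j.insertNth c x)) : Fin (m+1) → ℝ) j = 0 := by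
      intro c x j hcR
      rcases eq_or_ne j i with rfl | hj
      · simp only [Pi.single_eq_same]
        apply image_eq_zero_of_notMem_tsupport
        intro hmem
        have := hR hmem
        simp only [Metric.mem_ball, dist_zero_right] at this
        have h1 : |c| ≤ ‖(j.insertNth c x : Fin (m+1) → ℝ)‖ := by
          simpa using norm_le_pi_norm (j.insertNth c x : Fin (m+1) → ℝ) j
        rw [hcR] at h1; linarith
      · simp [Pi.single_apply, hj]
    have hdiv : ∀ x, (∑ j, (ContinuousLinearMap.pi (Pi.single i (fderiv ℝ h x)))
        (Pi.single j 1) j) = fderiv ℝ h x (Pi.single i 1) := by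
      intro x
      rw [Finset.sum_eq_single i]
      · simp
      · intro j _ hj
        simp [Pi.single_apply, hj]
      · simp
    rw [show (∫ x in Icc a b, ∑ j, (ContinuousLinearMap.pi
          (Pi.single i (fderiv ℝ h x))) (Pi.single j 1) j)
        = ∫ x in Icc a b, fderiv ℝ h x (Pi.single i 1) from
        integral_congr_ae (Filter.Eventually.of_forall fun x => hdiv x)] at key
    have hout : ∀ x ∉ Icc a b, fderiv ℝ h x (Pi.single i 1) = 0 := by
      intro x hx
      have hns : x ∉ tsupport h := fun hmem => hx (hsupIcc hmem)
      have h0 : fderiv ℝ h x = 0 := by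
        by_contra hne
        exact hns (support_fderiv_subset ℝ (Function.mem_support.2 hne))
      simp [h0]
    rw [setIntegral_eq_integral_of_forall_compl_eq_zero hout] at key
    rw [key]
    apply Finset.sum_eq_zero
    intro j _
    rw [integral_congr_ae (Filter.Eventually.of_forall fun x =>
        hzero (b j) x j (by simp [hb, abs_of_pos hR0])),
      integral_congr_ae (Filter.Eventually.of_forall fun x =>
        hzero (a j) x j (by simp [ha, abs_of_pos hR0, abs_of_neg, hR0.le]))]
    simp
  · exact (continuous_pi fun j => by
      by_cases hj : j = i
      · subst hj; simpa using hh.continuous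
      · simpa [Pi.single_apply, hj] using continuous_const).continuousOn
  · intro x _
    have hdh : HasFDerivAt h (fderiv ℝ h x) x :=
      (hh.differentiable (by norm_num) x).hasFDerivAt
    exact hasFDerivAt_pi.2 fun j => by
      rcases eq_or_ne j i with rfl | hj
      · simpa using hdh
      · simpa [Pi.single_apply, hj, Ne.symm hj] using hasFDerivAt_const (0:ℝ) x
  · apply (hderc.continuousOn.integrableOn_compact isCompact_Icc).congr_fun ?_ measurableSet_Icc
    intro x _
    simp only
    rw [Finset.sum_eq_single i]
    · simp
    · intro j _ hj
      simp [Pi.single_apply, hj]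
    · simp

lemma integral_pderiv_eq_zero {n : ℕ} (h : EuclideanSpace ℝ (Fin n) → ℝ)
    (hh : ContDiff ℝ 1 h) (hc : HasCompactSupport h) (i : Fin n) :
    ∫ x, fderiv ℝ h x (EuclideanSpace.single i 1) = 0 := by
  obtain ⟨m, rfl⟩ : ∃ m, n = m + 1 := ⟨n - 1, (Nat.succ_pred_eq_of_pos i.pos).symm⟩
  set e := EuclideanSpace.equiv (Fin (m+1)) ℝ with he
  set g : (Fin (m+1) → ℝ) → ℝ := h ∘ e.symm with hg
  have hgc1 : ContDiff ℝ 1 g := hh.comp e.symm.contDiff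
  have hgcs : HasCompactSupport g := hc.comp_homeomorph e.symm.toHomeomorph
  have hder : ∀ y, fderiv ℝ g y (Pi.single i 1)
      = fderiv ℝ h (e.symm y) (EuclideanSpace.single i 1) := by
    intro y
    have : fderiv ℝ g y = (fderiv ℝ h (e.symm y)).comp (e.symm : _ →L[ℝ] _) := by
      rw [hg, fderiv_comp y (hh.differentiable (by norm_num) _) e.symm.differentiableAt]
      rw [e.symm.fderiv]
    rw [this]
    rfl
  have hmp := (EuclideanSpace.volume_preserving_symm_measurableEquiv_toLp (Fin (m+1))).symm
  have := hmp.integral_comp (MeasurableEquiv.toLp 2 (Fin (m+1) → ℝ)).measurableEmbedding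
    (fun x => fderiv ℝ h x (EuclideanSpace.single i 1))
  rw [← this]
  have : ∀ y : Fin (m+1) → ℝ,
      fderiv ℝ h ((MeasurableEquiv.toLp 2 (Fin (m+1) → ℝ)).symm.symm y)
        (EuclideanSpace.single i 1) = fderiv ℝ g y (Pi.single i 1) := by
    intro y; rw [hder y]; rfl
  rw [integral_congr_ae (Filter.Eventually.of_forall this)]
  exact pi_integral_pderiv_eq_zero g hgc1 hgcs i

open scoped InnerProductSpace

lemma grad_inner {n : ℕ} (f : EuclideanSpace ℝ (Fin n) → ℝ) (x y : EuclideanSpace ℝ (Fin n)) :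
    ⟪gradient f x, y⟫_ℝ = fderiv ℝ f x y :=
  InnerProductSpace.toDual_symm_apply

lemma grad_coord {n : ℕ} (f : EuclideanSpace ℝ (Fin n) → ℝ) (x : EuclideanSpace ℝ (Fin n))
    (i : Fin n) : gradient f x i = fderiv ℝ f x (EuclideanSpace.single i 1) := by
  rw [← grad_inner, EuclideanSpace.inner_single_right]
  simp

lemma inner_grad_sum {n : ℕ} (f g : EuclideanSpace ℝ (Fin n) → ℝ) (x : EuclideanSpace ℝ (Fin n)) :
    ⟪gradient f x, gradient g x⟫_ℝ
      = ∑ i, fderiv ℝ f x (EuclideanSpace.single i 1) * fderiv ℝ g x (EuclideanSpace.single i 1) := by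
  rw [PiLp.inner_apply]
  exact Finset.sum_congr rfl fun i _ => by
    rw [← grad_coord, ← grad_coord]; simp [mul_comm]

lemma continuous_gradient {n : ℕ} (f : EuclideanSpace ℝ (Fin n) → ℝ) (hf : ContDiff ℝ 1 f) :
    Continuous (gradient f) := by
  have : Continuous (fderiv ℝ f) := hf.continuous_fderiv (by norm_num)
  exact (InnerProductSpace.toDual ℝ (EuclideanSpace ℝ (Fin n))).symm.continuous.comp this

lemma contDiff_pderiv {n : ℕ} (f : EuclideanSpace ℝ (Fin n) → ℝ) (hf : ContDiff ℝ 2 f)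
    (i : Fin n) : ContDiff ℝ 1 (fun y => fderiv ℝ f y (EuclideanSpace.single i 1)) :=
  (hf.fderiv_right (m := 1) (by norm_num)).clm_apply contDiff_const

lemma continuous_lap {n : ℕ} (f : EuclideanSpace ℝ (Fin n) → ℝ) (hf : ContDiff ℝ 2 f) :
    Continuous (lap f) := by
  apply continuous_finset_sum
  intro i _
  exact (((contDiff_pderiv f hf i).fderiv_right (m := 0)
    (by norm_num)).continuous).clm_apply continuous_const

lemma ibp {n : ℕ} (f g : EuclideanSpace ℝ (Fin n) → ℝ)
    (hf : ContDiff ℝ 2 f) (hg : ContDiff ℝ 1 g) (hgc : HasCompactSupport g) :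
    ∫ x, g x * lap f x = - ∫ x, ⟪gradient f x, gradient g x⟫_ℝ := by
  set F : Fin n → EuclideanSpace ℝ (Fin n) → ℝ :=
    fun i y => fderiv ℝ f y (EuclideanSpace.single i 1) with hF
  have hFc : ∀ i, ContDiff ℝ 1 (F i) := fun i => contDiff_pderiv f hf i
  have hHc : ∀ i, ContDiff ℝ 1 (fun y => g y * F i y) := fun i => hg.mul (hFc i)
  have hHcs : ∀ i, HasCompactSupport (fun y => g y * F i y) := fun i => hgc.mul_right
  have hzero : ∀ i, ∫ x, fderiv ℝ (fun y => g y * F i y) x (EuclideanSpace.single i 1) = 0 :=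
    fun i => integral_pderiv_eq_zero _ (hHc i) (hHcs i) i
  have hexp : ∀ i x, fderiv ℝ (fun y => g y * F i y) x (EuclideanSpace.single i 1)
      = fderiv ℝ g x (EuclideanSpace.single i 1) * F i x
        + g x * fderiv ℝ (F i) x (EuclideanSpace.single i 1) := by
    intro i x
    rw [fderiv_fun_mul (hg.differentiable (by norm_num) x) ((hFc i).differentiable (by norm_num) x)]
    simp [mul_comm]
    ring
  -- integrability of the pieces
  have hint1 : Integrable (fun x => g x * lap f x) :=
    ((hg.continuous).mul (continuous_lap f hf)).integrable_of_hasCompactSupport hgc.mul_right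
  have hint2 : Integrable (fun x => ⟪gradient f x, gradient g x⟫_ℝ) := by
    apply Continuous.integrable_of_hasCompactSupport
    · exact (continuous_gradient f (hf.of_le (by norm_num))).inner (continuous_gradient g hg)
    · apply HasCompactSupport.mono (hgc.fderiv ℝ)
      intro x hx
      simp only [Function.mem_support] at hx ⊢
      intro h0
      apply hx
      rw [show gradient g x = (InnerProductSpace.toDual ℝ _).symm (fderiv ℝ g x) from rfl, h0,
        map_zero, inner_zero_right]
  have hintI : ∀ i, Integrable
      (fun x => fderiv ℝ (fun y => g y * F i y) x (EuclideanSpace.single i 1)) := by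
    intro i
    apply Continuous.integrable_of_hasCompactSupport
    · exact (((hHc i).fderiv_right (m := 0) (by norm_num)).continuous).clm_apply continuous_const
    · exact (hHcs i).fderiv_apply ℝ _
  have hsum : ∫ x, ∑ i, fderiv ℝ (fun y => g y * F i y) x (EuclideanSpace.single i 1) = 0 := by
    rw [integral_finset_sum _ (fun i _ => hintI i)]
    simp [hzero]
  have hptw : ∀ x, (∑ i, fderiv ℝ (fun y => g y * F i y) x (EuclideanSpace.single i 1))
      = ⟪gradient f x, gradient g x⟫_ℝ + g x * lap f x := by
    intro x
    rw [inner_grad_sum]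
    simp only [hexp]
    rw [Finset.sum_add_distrib, ← Finset.mul_sum]
    congr 1
    exact Finset.sum_congr rfl fun i _ => by rw [mul_comm]
  rw [integral_congr_ae (Filter.Eventually.of_forall hptw)] at hsum
  rw [integral_add hint2 hint1] at hsum
  linarith

theorem key_estimates_biharmonic (n : ℕ) (p s : ℝ) (hp : 0 < p)
    (hs0 : s ≠ 0) (hs1 : s ≠ -1)
    (u v : EuclideanSpace ℝ (Fin n) → ℝ)
    (hu : ContDiff ℝ 2 u) (hv : ContDiff ℝ 2 v)
    (hu0 : ∀ x, 0 < u x) (hv0 : ∀ x, 0 < v x)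
    (hue : ∀ x, -lap u x = v x ^ p) (hve : ∀ x, -lap v x = u x)
    (φ : EuclideanSpace ℝ (Fin n) → ℝ) (hφ : ContDiff ℝ 2 φ)
    (hφc : HasCompactSupport φ) :
    (∫ x, u x * v x ^ (s - 1) * ‖gradient v x‖ ^ 2 * φ x)
    = (1 / s) * (∫ x, u x ^ (2 : ℕ) * v x ^ s * φ x)
      - (1 / (s * (s + 1))) * (∫ x, v x ^ (p + 1 + s) * φ x)
      + ((1 / (s * (s + 1))) *
          (∫ x, v x ^ (s + 1) * ⟪gradient u x, gradient φ x⟫_ℝ)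
        - (1 / s) *
          (∫ x, u x * v x ^ s * ⟪gradient v x, gradient φ x⟫_ℝ)) := by
  have hs1' : s + 1 ≠ 0 := fun h => hs1 (by linarith)
  have hud : Differentiable ℝ u := hu.differentiable (by norm_num)
  have hvd : Differentiable ℝ v := hv.differentiable (by norm_num)
  have hφd : Differentiable ℝ φ := hφ.differentiable (by norm_num)
  have hvc : Continuous v := hv.continuous
  have hvt : ∀ t : ℝ, ContDiff ℝ 1 (fun x => v x ^ t) := by
    intro t
    rw [contDiff_iff_contDiffAt]
    intro x
    exact ((hv.of_le (by norm_num)).contDiffAt).rpow_const_of_ne (hv0 x).ne'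
  have hvtc : ∀ t : ℝ, Continuous (fun x => v x ^ t) := fun t => (hvt t).continuous
  have hgu : Continuous (gradient u) := continuous_gradient u (hu.of_le (by norm_num))
  have hgv : Continuous (gradient v) := continuous_gradient v (hv.of_le (by norm_num))
  have hgφ : Continuous (gradient φ) := continuous_gradient φ (hφ.of_le (by norm_num))
  have hφgrad : HasCompactSupport (gradient φ) :=
    (hφc.fderiv ℝ).comp_left
      (g := fun L => (InnerProductSpace.toDual ℝ (EuclideanSpace ℝ (Fin n))).symm L)
      (map_zero _)
  -- integrability helpers
  have hintφ : ∀ k : EuclideanSpace ℝ (Fin n) → ℝ, Continuous k →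
      (∀ x, φ x = 0 → k x = 0) → Integrable k := by
    intro k hk h0
    apply hk.integrable_of_hasCompactSupport
    apply hφc.mono
    intro x hx
    simp only [Function.mem_support] at hx ⊢
    exact fun hφx => hx (h0 x hφx)
  have hintgφ : ∀ k : EuclideanSpace ℝ (Fin n) → ℝ, Continuous k →
      (∀ x, gradient φ x = 0 → k x = 0) → Integrable k := by
    intro k hk h0
    apply hk.integrable_of_hasCompactSupport
    apply hφgrad.mono
    intro x hx
    simp only [Function.mem_support] at hx ⊢
    exact fun hφx => hx (h0 x hφx)
  -- the six integrals
  set A := ∫ x, u x * v x ^ (s - 1) * ‖gradient v x‖ ^ 2 * φ x with hA_def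
  set B := ∫ x, u x ^ (2 : ℕ) * v x ^ s * φ x with hB_def
  set C := ∫ x, v x ^ (p + 1 + s) * φ x with hC_def
  set D := ∫ x, v x ^ (s + 1) * ⟪gradient u x, gradient φ x⟫_ℝ with hD_def
  set Ee := ∫ x, u x * v x ^ s * ⟪gradient v x, gradient φ x⟫_ℝ with hE_def
  set G := ∫ x, v x ^ s * φ x * ⟪gradient u x, gradient v x⟫_ℝ with hG_def
  -- integrabilities
  have iG : Integrable (fun x => v x ^ s * φ x * ⟪gradient u x, gradient v x⟫_ℝ) :=
    hintφ _ (((hvtc s).mul hφ.continuous).mul (hgu.inner hgv))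
      (fun x hx => by rw [hx]; ring)
  have iA : Integrable (fun x => s * (u x * v x ^ (s-1) * ‖gradient v x‖ ^ 2 * φ x)) :=
    hintφ _ (continuous_const.mul (((hu.continuous.mul (hvtc (s-1))).mul
      ((hgv.norm).pow 2)).mul hφ.continuous)) (fun x hx => by rw [hx]; ring)
  have iE : Integrable (fun x => u x * v x ^ s * ⟪gradient v x, gradient φ x⟫_ℝ) :=
    hintgφ _ ((hu.continuous.mul (hvtc s)).mul (hgv.inner hgφ))
      (fun x hx => by rw [hx, inner_zero_right]; ring)
  have iG' : Integrable (fun x => (s+1) * (v x ^ s * φ x * ⟪gradient u x, gradient v x⟫_ℝ)) :=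
    iG.const_mul _
  have iD : Integrable (fun x => v x ^ (s+1) * ⟪gradient u x, gradient φ x⟫_ℝ) :=
    hintgφ _ ((hvtc (s+1)).mul (hgu.inner hgφ))
      (fun x hx => by rw [hx, inner_zero_right]; ring)
  -- first identity
  have hg1 : ContDiff ℝ 1 (fun x => u x * v x ^ s * φ x) :=
    ((hu.of_le (by norm_num)).mul (hvt s)).mul (hφ.of_le (by norm_num))
  have hg1c : HasCompactSupport (fun x => u x * v x ^ s * φ x) := hφc.mul_left
  have e1 := ibp v (fun x => u x * v x ^ s * φ x) hv hg1 hg1c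
  have hlhs1 : ∀ x, (fun x => u x * v x ^ s * φ x) x * lap v x
      = -(u x ^ (2:ℕ) * v x ^ s * φ x) := by
    intro x
    have h := hve x
    have : lap v x = - u x := by linarith
    rw [this]
    ring
  have hptw1 : ∀ x, ⟪gradient v x, gradient (fun x => u x * v x ^ s * φ x) x⟫_ℝ
      = v x ^ s * φ x * ⟪gradient u x, gradient v x⟫_ℝ
        + s * (u x * v x ^ (s-1) * ‖gradient v x‖ ^ 2 * φ x)
        + u x * v x ^ s * ⟪gradient v x, gradient φ x⟫_ℝ := by
    intro x
    have hws : HasFDerivAt (fun y => v y ^ s) ((s * v x ^ (s-1)) • fderiv ℝ v x) x :=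
      (hvd x).hasFDerivAt.rpow_const (Or.inl (hv0 x).ne')
    have h1 := (((hud x).hasFDerivAt.mul hws).mul (hφd x).hasFDerivAt)
    rw [real_inner_comm, grad_inner,
      show (fun x => u x * v x ^ s * φ x) = ((u * fun y => v y ^ s) * φ) from rfl, h1.fderiv]
    simp only [ContinuousLinearMap.add_apply, ContinuousLinearMap.smul_apply, smul_eq_mul,
      Pi.mul_apply]
    rw [← grad_inner φ, ← grad_inner v, ← grad_inner u,
      real_inner_comm (gradient φ x) (gradient v x),
      real_inner_self_eq_norm_sq]
    ring
  have iGA : Integrable (fun x => v x ^ s * φ x * ⟪gradient u x, gradient v x⟫_ℝ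
      + s * (u x * v x ^ (s-1) * ‖gradient v x‖ ^ 2 * φ x)) volume := iG.add iA
  rw [integral_congr_ae (Filter.Eventually.of_forall hlhs1), integral_neg,
    integral_congr_ae (Filter.Eventually.of_forall hptw1),
    integral_add iGA iE, integral_add iG iA, integral_const_mul, neg_inj] at e1
  -- e1 : B = G + s * A + Ee
  -- second identity
  have hg2 : ContDiff ℝ 1 (fun x => v x ^ (s+1) * φ x) :=
    (hvt (s+1)).mul (hφ.of_le (by norm_num))
  have hg2c : HasCompactSupport (fun x => v x ^ (s+1) * φ x) := hφc.mul_left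
  have e2 := ibp u (fun x => v x ^ (s+1) * φ x) hu hg2 hg2c
  have hlhs2 : ∀ x, (fun x => v x ^ (s+1) * φ x) x * lap u x
      = -(v x ^ (p + 1 + s) * φ x) := by
    intro x
    have h := hue x
    have h2 : lap u x = - (v x ^ p) := by linarith
    rw [h2]
    have h3 : v x ^ (s+1) * v x ^ p = v x ^ (p+1+s) := by
      rw [← Real.rpow_add (hv0 x)]
      ring_nf
    simp only []
    calc v x ^ (s+1) * φ x * -(v x ^ p) = -(v x ^ (s+1) * v x ^ p * φ x) := by ring
    _ = -(v x ^ (p+1+s) * φ x) := by rw [h3]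
  have hptw2 : ∀ x, ⟪gradient u x, gradient (fun x => v x ^ (s+1) * φ x) x⟫_ℝ
      = (s+1) * (v x ^ s * φ x * ⟪gradient u x, gradient v x⟫_ℝ)
        + v x ^ (s+1) * ⟪gradient u x, gradient φ x⟫_ℝ := by
    intro x
    have hws : HasFDerivAt (fun y => v y ^ (s+1)) (((s+1) * v x ^ (s+1-1)) • fderiv ℝ v x) x :=
      (hvd x).hasFDerivAt.rpow_const (Or.inl (hv0 x).ne')
    have hse : s + 1 - 1 = s := by ring
    rw [hse] at hws
    have h1 := hws.mul (hφd x).hasFDerivAt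
    rw [real_inner_comm, grad_inner,
      show (fun x => v x ^ (s+1) * φ x) = ((fun y => v y ^ (s+1)) * φ) from rfl, h1.fderiv]
    simp only [ContinuousLinearMap.add_apply, ContinuousLinearMap.smul_apply, smul_eq_mul]
    rw [← grad_inner φ, ← grad_inner v,
      real_inner_comm (gradient φ x) (gradient u x),
      real_inner_comm (gradient v x) (gradient u x)]
    ring
  rw [integral_congr_ae (Filter.Eventually.of_forall hlhs2), integral_neg,
    integral_congr_ae (Filter.Eventually.of_forall hptw2),
    integral_add iG' iD, integral_const_mul, neg_inj] at e2
  -- e2 : C = (s+1) * G + D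
  have hA : A = (B - G - Ee)/s := by
    field_simp
    linarith [e1]
  have hG : G = (C - D)/(s+1) := by
    field_simp
    linarith [e2]
  rw [hA, hG]
  field_simp
  ring
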